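/- For every k with 0 ≤ k ≤ n, the ℂ-algebra homomorphism f₍ₖ₎♯ : MvPolynomial (Fin n) ℂ → Module.End ℂ P determined (via MvPolynomial.aeval) by sending the variable yᵢ to the multiplication operator xᵢ when i < k and to the derivation operator ∂ᵢ when i ≥ k, is injective. (This is the paper's claim in Example 5.1.4 that each f₍ₖ₎ : Space(Aₙ(ℂ)) → 𝔸ⁿ is a dominant morphism.) -/

import Mathlib

open MvPolynomial


theorem pd_pow (n : ℕ) (i : Fin n) (b : ℕ) (u : Fin n →₀ ℕ) :
    (((pderiv i).toLinearMap : Module.End ℂ (MvPolynomial (Fin n) ℂ)) ^ b)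
      (monomial u (1:ℂ)) =
    ((u i).descFactorial b : ℂ) • monomial (u - Finsupp.single i b) (1:ℂ) := by
  induction b with
  | zero => simp
  | succ b ih =>
    rw [pow_succ', Module.End.mul_apply, ih, map_smul]
    have : (((pderiv i).toLinearMap : Module.End ℂ (MvPolynomial (Fin n) ℂ)))
        (monomial (u - Finsupp.single i b) (1:ℂ))
        = pderiv i (monomial (u - Finsupp.single i b) (1:ℂ)) := rfl
    rw [this, pderiv_monomial]
    rw [MvPolynomial.smul_monomial, MvPolynomial.smul_monomial]
    have he : (u - Finsupp.single i b) - Finsupp.single i 1 = u - Finsupp.single i (b+1) := by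
      rw [tsub_tsub, Finsupp.single_add]
    have hc : ((u - Finsupp.single i b) i : ℕ) = u i - b := by
      simp [Finsupp.tsub_apply]
    rw [he, hc]
    congr 1
    rw [Nat.descFactorial_succ, Nat.cast_mul]
    simp [smul_eq_mul]
    ring

theorem key (n k : ℕ)
    (f : MvPolynomial (Fin n) ℂ →ₐ[ℂ] Module.End ℂ (MvPolynomial (Fin n) ℂ))
    (hf : ∀ i : Fin n,
      f (X i) =
        if (i : ℕ) < k then
          (LinearMap.mulLeft ℂ (X i) : Module.End ℂ (MvPolynomial (Fin n) ℂ))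
        else
          ((pderiv i).toLinearMap : Module.End ℂ (MvPolynomial (Fin n) ℂ)))
    (m : Fin n →₀ ℕ) :
    ∀ t : Fin n →₀ ℕ,
      (f (monomial m 1)) (monomial t (1:ℂ)) =
      ((∏ j ∈ (m.filter fun i : Fin n => ¬ (i:ℕ) < k).support, (t j).descFactorial (m j) : ℕ) : ℂ) •
        monomial ((m.filter fun i : Fin n => (i:ℕ) < k) + (t - m.filter fun i : Fin n => ¬ (i:ℕ) < k)) (1:ℂ) := by
  induction m using Finsupp.induction with
  | zero => intro t; simp [Finsupp.filter_zero]
  | single_add i b m0 hi0 hb ih =>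
    intro t
    have hmon : (monomial (Finsupp.single i b + m0) (1:ℂ)) = X i ^ b * monomial m0 1 := by
      rw [X_pow_eq_monomial, monomial_mul, one_mul]
    rw [hmon, map_mul, Module.End.mul_apply, ih t, map_smul, map_pow, hf i]
    by_cases hik : (i:ℕ) < k
    · rw [if_pos hik, LinearMap.pow_mulLeft, LinearMap.mulLeft_apply,
        X_pow_eq_monomial, monomial_mul, one_mul]
      have hlo : ((Finsupp.single i b + m0).filter fun j : Fin n => (j:ℕ) < k)
          = Finsupp.single i b + (m0.filter fun j : Fin n => (j:ℕ) < k) := by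
        rw [Finsupp.filter_add, Finsupp.filter_single_of_pos (p := fun j : Fin n => (j:ℕ) < k) hik]
      have hhi : ((Finsupp.single i b + m0).filter fun j : Fin n => ¬ (j:ℕ) < k)
          = m0.filter fun j : Fin n => ¬ (j:ℕ) < k := by
        rw [Finsupp.filter_add, Finsupp.filter_single_of_neg (p := fun j : Fin n => ¬ (j:ℕ) < k) (fun h => h hik), zero_add]
      rw [hlo, hhi]
      have hprod : ∏ j ∈ (m0.filter fun j : Fin n => ¬ (j:ℕ) < k).support,
            (t j).descFactorial ((Finsupp.single i b + m0) j)
          = ∏ j ∈ (m0.filter fun j : Fin n => ¬ (j:ℕ) < k).support,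
            (t j).descFactorial (m0 j) := by
        refine Finset.prod_congr rfl fun j hj => ?_
        have hji : j ≠ i := by
          rintro rfl
          have h2 := Finsupp.mem_support_iff.mp hj
          simp [Finsupp.filter_apply, hik] at h2
        simp [Finsupp.add_apply, Finsupp.single_apply, Ne.symm hji]
      rw [hprod, add_assoc]
    · rw [if_neg hik, pd_pow]
      have hu : (((m0.filter fun j : Fin n => (j:ℕ) < k)
          + (t - m0.filter fun j : Fin n => ¬ (j:ℕ) < k)) i) = t i := by
        have h1 : m0 i = 0 := Finsupp.notMem_support_iff.mp hi0
        simp [Finsupp.add_apply, Finsupp.tsub_apply, Finsupp.filter_apply, hik, h1]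
      rw [hu, smul_smul]
      have hlo : ((Finsupp.single i b + m0).filter fun j : Fin n => (j:ℕ) < k)
          = m0.filter fun j : Fin n => (j:ℕ) < k := by
        rw [Finsupp.filter_add, Finsupp.filter_single_of_neg (p := fun j : Fin n => (j:ℕ) < k) hik, zero_add]
      have hhi : ((Finsupp.single i b + m0).filter fun j : Fin n => ¬ (j:ℕ) < k)
          = Finsupp.single i b + (m0.filter fun j : Fin n => ¬ (j:ℕ) < k) := by
        rw [Finsupp.filter_add, Finsupp.filter_single_of_pos (p := fun j : Fin n => ¬ (j:ℕ) < k) hik]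
      rw [hlo, hhi]
      have hi0' : i ∉ (m0.filter fun j : Fin n => ¬ (j:ℕ) < k).support := by
        have h1 : m0 i = 0 := Finsupp.notMem_support_iff.mp hi0
        simp [Finsupp.mem_support_iff, Finsupp.filter_apply, h1]
      have hsupp : (Finsupp.single i b + (m0.filter fun j : Fin n => ¬ (j:ℕ) < k)).support
          = insert i (m0.filter fun j : Fin n => ¬ (j:ℕ) < k).support := by
        rw [Finsupp.support_add_eq, Finsupp.support_single_ne_zero _ hb,
          Finset.insert_eq]
        rw [Finsupp.support_single_ne_zero _ hb]
        simpa using hi0'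
      have hprod : ∏ j ∈ (Finsupp.single i b + (m0.filter fun j : Fin n => ¬ (j:ℕ) < k)).support,
            (t j).descFactorial ((Finsupp.single i b + m0) j)
          = (t i).descFactorial b *
            ∏ j ∈ (m0.filter fun j : Fin n => ¬ (j:ℕ) < k).support,
              (t j).descFactorial (m0 j) := by
        rw [hsupp, Finset.prod_insert hi0']
        have h1 : m0 i = 0 := Finsupp.notMem_support_iff.mp hi0
        congr 1
        · simp [Finsupp.add_apply, Finsupp.single_apply, h1]
        · refine Finset.prod_congr rfl fun j hj => ?_
          have hji : j ≠ i := fun h => hi0' (h ▸ hj)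
          simp [Finsupp.add_apply, Finsupp.single_apply, Ne.symm hji]
      rw [hprod]
      have hexp : ((m0.filter fun j : Fin n => (j:ℕ) < k)
            + (t - m0.filter fun j : Fin n => ¬ (j:ℕ) < k)) - Finsupp.single i b
          = (m0.filter fun j : Fin n => (j:ℕ) < k)
            + (t - (Finsupp.single i b + (m0.filter fun j : Fin n => ¬ (j:ℕ) < k))) := by
        ext j
        by_cases hji : j = i
        · subst hji
          have h1 : m0 j = 0 := Finsupp.notMem_support_iff.mp hi0
          simp [Finsupp.add_apply, Finsupp.tsub_apply, Finsupp.filter_apply, hik, h1]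
        · simp [Finsupp.add_apply, Finsupp.tsub_apply, Finsupp.single_apply, Ne.symm hji,
            Finsupp.filter_apply]
      rw [hexp]
      congr 1
      push_cast
      ring

theorem extract (n k : ℕ)
    (f : MvPolynomial (Fin n) ℂ →ₐ[ℂ] Module.End ℂ (MvPolynomial (Fin n) ℂ))
    (hf : ∀ i : Fin n,
      f (X i) =
        if (i : ℕ) < k then
          (LinearMap.mulLeft ℂ (X i) : Module.End ℂ (MvPolynomial (Fin n) ℂ))
        else
          ((pderiv i).toLinearMap : Module.End ℂ (MvPolynomial (Fin n) ℂ)))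
    (key : ∀ (m t : Fin n →₀ ℕ),
      (f (monomial m 1)) (monomial t (1:ℂ)) =
      ((∏ j ∈ (m.filter fun i : Fin n => ¬ (i:ℕ) < k).support,
          (t j).descFactorial (m j) : ℕ) : ℂ) •
        monomial ((m.filter fun i : Fin n => (i:ℕ) < k)
          + (t - m.filter fun i : Fin n => ¬ (i:ℕ) < k)) (1:ℂ))
    (m : Fin n →₀ ℕ) (p : MvPolynomial (Fin n) ℂ) :
    coeff (m.filter fun i : Fin n => (i:ℕ) < k)
      ((f p) (monomial (m.filter fun i : Fin n => ¬ (i:ℕ) < k) (1:ℂ)))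
    = ((∏ j ∈ (m.filter fun i : Fin n => ¬ (i:ℕ) < k).support,
        Nat.factorial ((m.filter fun i : Fin n => ¬ (i:ℕ) < k) j) : ℕ) : ℂ) * coeff m p := by
  set lo := fun m' : Fin n →₀ ℕ => m'.filter fun i : Fin n => (i:ℕ) < k with hlodef
  set hi := fun m' : Fin n →₀ ℕ => m'.filter fun i : Fin n => ¬ (i:ℕ) < k with hhidef
  induction p using MvPolynomial.induction_on' with
  | add p q hp hq =>
    simp only [map_add, LinearMap.add_apply, coeff_add, hp, hq]
    ring
  | monomial m' c =>
    have hsm : (monomial m' c : MvPolynomial (Fin n) ℂ) = c • monomial m' 1 := by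
      rw [MvPolynomial.smul_monomial, smul_eq_mul, mul_one]
    simp only [hsm, map_smul, LinearMap.smul_apply, coeff_smul, key, coeff_monomial,
      smul_eq_mul, mul_one]
    by_cases hmm : m' = m
    · subst hmm
      rw [if_pos rfl, if_pos (by rw [tsub_self, add_zero])]
      have : ∏ j ∈ (hi m').support, ((hi m') j).descFactorial (m' j)
          = ∏ j ∈ (hi m').support, Nat.factorial ((hi m') j) := by
        refine Finset.prod_congr rfl fun j hj => ?_
        have hjk : ¬ (j:ℕ) < k := by
          by_contra hc
          exact Finsupp.mem_support_iff.mp hj (by simp [hhidef, Finsupp.filter_apply, hc])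
        have : (hi m') j = m' j := by simp [hhidef, Finsupp.filter_apply, hjk]
        rw [this, Nat.descFactorial_self]
      rw [this]
      push_cast
      ring
    · simp only [if_neg hmm, mul_zero]
      by_cases hexp : lo m' + (hi m - hi m') = lo m
      swap
      · rw [if_neg hexp]; simp
      rw [if_pos hexp]
      have hD : (∏ j ∈ (hi m').support, ((hi m) j).descFactorial (m' j)) = 0 := by
        by_contra hD
        apply hmm
        have hle : ∀ j : Fin n, ¬ (j:ℕ) < k → m' j ≤ m j := by
          intro j hjk
          by_cases hjs : j ∈ (hi m').support
          · have := Finset.prod_ne_zero_iff.mp hD j hjs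
            have h2 : m' j ≤ (hi m) j := by
              by_contra hgt
              exact this (Nat.descFactorial_eq_zero_iff_lt.mpr (by omega))
            simpa [hhidef, Finsupp.filter_apply, hjk, not_lt.1 hjk] using h2
          · have : (hi m') j = 0 := Finsupp.notMem_support_iff.mp hjs
            simp [hhidef, Finsupp.filter_apply, hjk] at this
            omega
        ext j
        have := DFunLike.congr_fun hexp j
        simp only [Finsupp.coe_add, Pi.add_apply, Finsupp.tsub_apply, hlodef, hhidef,
          Finsupp.filter_apply] at this
        by_cases hjk : (j:ℕ) < k
        · simpa [hjk] using this
        · have h1 := hle j hjk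
          simp [hjk] at this
          omega
      rw [hD]
      simp


/-- Example 5.1.4: for `0 ≤ k ≤ n`, the `ℂ`-algebra homomorphism
`f₍ₖ₎♯ : ℂ[y₁,…,yₙ] → End ℂ (ℂ[x₁,…,xₙ])` determined by sending the variable `yᵢ`
to the multiplication operator `xᵢ` when `i < k` and to the partial-derivative
operator `∂ᵢ` when `i ≥ k`, is injective (i.e. each morphism
`f₍ₖ₎ : Space Aₙ(ℂ) → 𝔸ⁿ` is dominant).  (Since `Module.End ℂ P` is
noncommutative, the homomorphism is specified by its values on the variables.) -/
theorem stmt_4 (n : ℕ) (hn : 0 < n) (k : ℕ) (hk : k ≤ n)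
    (f : MvPolynomial (Fin n) ℂ →ₐ[ℂ] Module.End ℂ (MvPolynomial (Fin n) ℂ))
    (hf : ∀ i : Fin n,
      f (X i) =
        if (i : ℕ) < k then
          (LinearMap.mulLeft ℂ (X i) : Module.End ℂ (MvPolynomial (Fin n) ℂ))
        else
          ((pderiv i).toLinearMap : Module.End ℂ (MvPolynomial (Fin n) ℂ))) :
    Function.Injective f := by
  rw [injective_iff_map_eq_zero]
  intro p hp
  ext m
  have h := extract n k f hf (key n k f hf) m p
  rw [hp] at h
  simp only [LinearMap.zero_apply, coeff_zero] at h
  have hC : ((∏ j ∈ (m.filter fun i : Fin n => ¬ (i:ℕ) < k).support,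
      Nat.factorial ((m.filter fun i : Fin n => ¬ (i:ℕ) < k) j) : ℕ) : ℂ) ≠ 0 := by
    rw [Nat.cast_ne_zero]
    exact Finset.prod_ne_zero_iff.mpr fun j _ => Nat.factorial_ne_zero _
  rcases mul_eq_zero.mp h.symm with h1 | h1
  · exact absurd h1 hC
  · simpa using h1
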